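/- Suppose α, β, γ ∈ ℂ satisfy α³ = β³ = γ³ = 1 and αβγ = 1, and A, B : ℂˣ → ℂ satisfy A(z) → 1 and B(z) → 1 as |z| → ∞, and the family of 3×3 matrices K(z) with rows (A(z), αB(z), α²B(z)), (β²B(z), A(z), βB(z)), (γB(z), γ²B(z), A(z)) satisfies the reflection equation (RE−). Then there exist a primitive cube root of unity w and b ∈ ℂ such that β = wα, γ = w²α, and (1−z²)·A(z) = (w²+bz−z²)·B(z) for all z ∈ ℂˣ. -/

import Mathlib

open Matrix Kronecker

noncomputable section

abbrev Idx9 := Fin 3 × Fin 3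

def flipP : Matrix Idx9 Idx9 ℂ := fun p q => if p.1 = q.2 ∧ p.2 = q.1 then 1 else 0

def RD3 (z : ℂ) : Matrix Idx9 Idx9 ℂ := fun p q =>
  let pf := z * (z - 1) / (z ^ 2 - z + 1)
  let qf := z / (z ^ 2 - z + 1)
  let rf := (1 - z) / (z ^ 2 - z + 1)
  match p, q with
  | (0,0), (0,0) => 1
  | (1,1), (1,1) => 1
  | (2,2), (2,2) => 1
  | (0,1), (0,2) => pf
  | (0,2), (0,1) => pf
  | (1,0), (1,2) => pf
  | (1,2), (1,0) => pf
  | (2,0), (2,1) => pf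
  | (2,1), (2,0) => pf
  | (0,1), (1,0) => qf
  | (0,2), (2,0) => qf
  | (1,0), (0,1) => qf
  | (1,2), (2,1) => qf
  | (2,0), (0,2) => qf
  | (2,1), (1,2) => qf
  | (0,1), (2,1) => rf
  | (0,2), (1,2) => rf
  | (1,0), (2,0) => rf
  | (1,2), (0,2) => rf
  | (2,0), (1,0) => rf
  | (2,1), (0,1) => rf
  | _, _ => 0

def MD3 (z : ℂ) : Matrix Idx9 Idx9 ℂ := fun p q =>
  match p, q with
  | (0,0), (0,0) => z ^ 2 + 1
  | (1,1), (1,1) => z ^ 2 + 1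
  | (2,2), (2,2) => z ^ 2 + 1
  | (0,0), (1,1) => z
  | (0,0), (2,2) => z
  | (1,1), (0,0) => z
  | (1,1), (2,2) => z
  | (2,2), (0,0) => z
  | (2,2), (1,1) => z
  | (0,1), (0,2) => 1
  | (0,2), (0,1) => 1
  | (1,0), (1,2) => 1
  | (1,2), (1,0) => 1
  | (2,0), (2,1) => 1
  | (2,1), (2,0) => 1
  | (0,1), (1,0) => -z
  | (0,2), (2,0) => -z
  | (1,0), (0,1) => -z
  | (1,2), (2,1) => -z
  | (2,0), (0,2) => -z
  | (2,1), (1,2) => -z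
  | (0,1), (2,1) => z ^ 2
  | (0,2), (1,2) => z ^ 2
  | (1,0), (2,0) => z ^ 2
  | (1,2), (0,2) => z ^ 2
  | (2,0), (1,0) => z ^ 2
  | (2,1), (0,1) => z ^ 2
  | _, _ => 0

def curlR (z : ℂ) : Matrix Idx9 Idx9 ℂ :=
  ((z ^ 2 - z + 1) / ((z - 1) * (z ^ 3 - 1))) • MD3 z

def pt1 (A : Matrix Idx9 Idx9 ℂ) : Matrix Idx9 Idx9 ℂ :=
  fun p q => A (q.1, p.2) (p.1, q.2)

/-- The reflection equation (RE−). -/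
def REminus (K : ℂ → Matrix (Fin 3) (Fin 3) ℂ) : Prop :=
  ∀ x y : ℂ, x ≠ 0 → y ≠ 0 →
    (x * y⁻¹) ^ 2 - x * y⁻¹ + 1 ≠ 0 → (x * y) ^ 2 - x * y + 1 ≠ 0 →
    RD3 (x * y⁻¹) * (K x ⊗ₖ (1 : Matrix (Fin 3) (Fin 3) ℂ)) *
        (flipP * RD3 (x * y) * flipP) * ((1 : Matrix (Fin 3) (Fin 3) ℂ) ⊗ₖ K y)
      = ((1 : Matrix (Fin 3) (Fin 3) ℂ) ⊗ₖ K y) * RD3 (x * y) *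
          (K x ⊗ₖ (1 : Matrix (Fin 3) (Fin 3) ℂ)) * (flipP * RD3 (x * y⁻¹) * flipP)

/-- The dual reflection equation (RE+). -/
def REplus (K : ℂ → Matrix (Fin 3) (Fin 3) ℂ) : Prop :=
  ∀ x y : ℂ, x ≠ 0 → y ≠ 0 →
    (y * x⁻¹) ^ 2 - y * x⁻¹ + 1 ≠ 0 → (x * y) ^ 3 ≠ 1 →
    RD3 (y * x⁻¹) * (K x ⊗ₖ (1 : Matrix (Fin 3) (Fin 3) ℂ)) *
        (flipP * curlR (x * y) * flipP) * ((1 : Matrix (Fin 3) (Fin 3) ℂ) ⊗ₖ K y)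
      = ((1 : Matrix (Fin 3) (Fin 3) ℂ) ⊗ₖ K y) * curlR (x * y) *
          (K x ⊗ₖ (1 : Matrix (Fin 3) (Fin 3) ℂ)) * (flipP * RD3 (y * x⁻¹) * flipP)

def StarCond (h : ZMod 3 → ZMod 3 → ℂ → ℂ) (z₀ : ℂ) : Prop :=
  ∀ (i j k l : ZMod 3) (y : ℂ),
    h i j z₀ * h k l y = h i (j + k + 2 * l) z₀ * h (2 * i + 2 * k) (2 * i + 2 * l) y

def NonDiag (h : ZMod 3 → ZMod 3 → ℂ → ℂ) : Prop :=
  ∃ (i j : ZMod 3) (y : ℂ), i ≠ j ∧ h i j y ≠ 0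

def Kof (h : ZMod 3 → ZMod 3 → ℂ → ℂ) (z : ℂ) : Matrix (Fin 3) (Fin 3) ℂ :=
  fun a b => h (((a : ℕ) : ZMod 3) + 1) (((b : ℕ) : ZMod 3) + 1) z

@[simp] lemma RD3_0000 (z : ℂ) : RD3 z (0,0) (0,0) = 1 := rfl
@[simp] lemma RD3_0001 (z : ℂ) : RD3 z (0,0) (0,1) = 0 := rfl
@[simp] lemma RD3_0002 (z : ℂ) : RD3 z (0,0) (0,2) = 0 := rfl
@[simp] lemma RD3_0010 (z : ℂ) : RD3 z (0,0) (1,0) = 0 := rfl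
@[simp] lemma RD3_0011 (z : ℂ) : RD3 z (0,0) (1,1) = 0 := rfl
@[simp] lemma RD3_0012 (z : ℂ) : RD3 z (0,0) (1,2) = 0 := rfl
@[simp] lemma RD3_0020 (z : ℂ) : RD3 z (0,0) (2,0) = 0 := rfl
@[simp] lemma RD3_0021 (z : ℂ) : RD3 z (0,0) (2,1) = 0 := rfl
@[simp] lemma RD3_0022 (z : ℂ) : RD3 z (0,0) (2,2) = 0 := rfl
@[simp] lemma RD3_0100 (z : ℂ) : RD3 z (0,1) (0,0) = 0 := rfl
@[simp] lemma RD3_0101 (z : ℂ) : RD3 z (0,1) (0,1) = 0 := rfl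
@[simp] lemma RD3_0102 (z : ℂ) : RD3 z (0,1) (0,2) = z * (z - 1) / (z ^ 2 - z + 1) := rfl
@[simp] lemma RD3_0110 (z : ℂ) : RD3 z (0,1) (1,0) = z / (z ^ 2 - z + 1) := rfl
@[simp] lemma RD3_0111 (z : ℂ) : RD3 z (0,1) (1,1) = 0 := rfl
@[simp] lemma RD3_0112 (z : ℂ) : RD3 z (0,1) (1,2) = 0 := rfl
@[simp] lemma RD3_0120 (z : ℂ) : RD3 z (0,1) (2,0) = 0 := rfl
@[simp] lemma RD3_0121 (z : ℂ) : RD3 z (0,1) (2,1) = (1 - z) / (z ^ 2 - z + 1) := rfl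
@[simp] lemma RD3_0122 (z : ℂ) : RD3 z (0,1) (2,2) = 0 := rfl
@[simp] lemma RD3_0200 (z : ℂ) : RD3 z (0,2) (0,0) = 0 := rfl
@[simp] lemma RD3_0201 (z : ℂ) : RD3 z (0,2) (0,1) = z * (z - 1) / (z ^ 2 - z + 1) := rfl
@[simp] lemma RD3_0202 (z : ℂ) : RD3 z (0,2) (0,2) = 0 := rfl
@[simp] lemma RD3_0210 (z : ℂ) : RD3 z (0,2) (1,0) = 0 := rfl
@[simp] lemma RD3_0211 (z : ℂ) : RD3 z (0,2) (1,1) = 0 := rfl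
@[simp] lemma RD3_0212 (z : ℂ) : RD3 z (0,2) (1,2) = (1 - z) / (z ^ 2 - z + 1) := rfl
@[simp] lemma RD3_0220 (z : ℂ) : RD3 z (0,2) (2,0) = z / (z ^ 2 - z + 1) := rfl
@[simp] lemma RD3_0221 (z : ℂ) : RD3 z (0,2) (2,1) = 0 := rfl
@[simp] lemma RD3_0222 (z : ℂ) : RD3 z (0,2) (2,2) = 0 := rfl
@[simp] lemma RD3_1000 (z : ℂ) : RD3 z (1,0) (0,0) = 0 := rfl
@[simp] lemma RD3_1001 (z : ℂ) : RD3 z (1,0) (0,1) = z / (z ^ 2 - z + 1) := rfl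
@[simp] lemma RD3_1002 (z : ℂ) : RD3 z (1,0) (0,2) = 0 := rfl
@[simp] lemma RD3_1010 (z : ℂ) : RD3 z (1,0) (1,0) = 0 := rfl
@[simp] lemma RD3_1011 (z : ℂ) : RD3 z (1,0) (1,1) = 0 := rfl
@[simp] lemma RD3_1012 (z : ℂ) : RD3 z (1,0) (1,2) = z * (z - 1) / (z ^ 2 - z + 1) := rfl
@[simp] lemma RD3_1020 (z : ℂ) : RD3 z (1,0) (2,0) = (1 - z) / (z ^ 2 - z + 1) := rfl
@[simp] lemma RD3_1021 (z : ℂ) : RD3 z (1,0) (2,1) = 0 := rfl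
@[simp] lemma RD3_1022 (z : ℂ) : RD3 z (1,0) (2,2) = 0 := rfl
@[simp] lemma RD3_1100 (z : ℂ) : RD3 z (1,1) (0,0) = 0 := rfl
@[simp] lemma RD3_1101 (z : ℂ) : RD3 z (1,1) (0,1) = 0 := rfl
@[simp] lemma RD3_1102 (z : ℂ) : RD3 z (1,1) (0,2) = 0 := rfl
@[simp] lemma RD3_1110 (z : ℂ) : RD3 z (1,1) (1,0) = 0 := rfl
@[simp] lemma RD3_1111 (z : ℂ) : RD3 z (1,1) (1,1) = 1 := rfl
@[simp] lemma RD3_1112 (z : ℂ) : RD3 z (1,1) (1,2) = 0 := rfl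
@[simp] lemma RD3_1120 (z : ℂ) : RD3 z (1,1) (2,0) = 0 := rfl
@[simp] lemma RD3_1121 (z : ℂ) : RD3 z (1,1) (2,1) = 0 := rfl
@[simp] lemma RD3_1122 (z : ℂ) : RD3 z (1,1) (2,2) = 0 := rfl
@[simp] lemma RD3_1200 (z : ℂ) : RD3 z (1,2) (0,0) = 0 := rfl
@[simp] lemma RD3_1201 (z : ℂ) : RD3 z (1,2) (0,1) = 0 := rfl
@[simp] lemma RD3_1202 (z : ℂ) : RD3 z (1,2) (0,2) = (1 - z) / (z ^ 2 - z + 1) := rfl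
@[simp] lemma RD3_1210 (z : ℂ) : RD3 z (1,2) (1,0) = z * (z - 1) / (z ^ 2 - z + 1) := rfl
@[simp] lemma RD3_1211 (z : ℂ) : RD3 z (1,2) (1,1) = 0 := rfl
@[simp] lemma RD3_1212 (z : ℂ) : RD3 z (1,2) (1,2) = 0 := rfl
@[simp] lemma RD3_1220 (z : ℂ) : RD3 z (1,2) (2,0) = 0 := rfl
@[simp] lemma RD3_1221 (z : ℂ) : RD3 z (1,2) (2,1) = z / (z ^ 2 - z + 1) := rfl
@[simp] lemma RD3_1222 (z : ℂ) : RD3 z (1,2) (2,2) = 0 := rfl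
@[simp] lemma RD3_2000 (z : ℂ) : RD3 z (2,0) (0,0) = 0 := rfl
@[simp] lemma RD3_2001 (z : ℂ) : RD3 z (2,0) (0,1) = 0 := rfl
@[simp] lemma RD3_2002 (z : ℂ) : RD3 z (2,0) (0,2) = z / (z ^ 2 - z + 1) := rfl
@[simp] lemma RD3_2010 (z : ℂ) : RD3 z (2,0) (1,0) = (1 - z) / (z ^ 2 - z + 1) := rfl
@[simp] lemma RD3_2011 (z : ℂ) : RD3 z (2,0) (1,1) = 0 := rfl
@[simp] lemma RD3_2012 (z : ℂ) : RD3 z (2,0) (1,2) = 0 := rfl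
@[simp] lemma RD3_2020 (z : ℂ) : RD3 z (2,0) (2,0) = 0 := rfl
@[simp] lemma RD3_2021 (z : ℂ) : RD3 z (2,0) (2,1) = z * (z - 1) / (z ^ 2 - z + 1) := rfl
@[simp] lemma RD3_2022 (z : ℂ) : RD3 z (2,0) (2,2) = 0 := rfl
@[simp] lemma RD3_2100 (z : ℂ) : RD3 z (2,1) (0,0) = 0 := rfl
@[simp] lemma RD3_2101 (z : ℂ) : RD3 z (2,1) (0,1) = (1 - z) / (z ^ 2 - z + 1) := rfl
@[simp] lemma RD3_2102 (z : ℂ) : RD3 z (2,1) (0,2) = 0 := rfl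
@[simp] lemma RD3_2110 (z : ℂ) : RD3 z (2,1) (1,0) = 0 := rfl
@[simp] lemma RD3_2111 (z : ℂ) : RD3 z (2,1) (1,1) = 0 := rfl
@[simp] lemma RD3_2112 (z : ℂ) : RD3 z (2,1) (1,2) = z / (z ^ 2 - z + 1) := rfl
@[simp] lemma RD3_2120 (z : ℂ) : RD3 z (2,1) (2,0) = z * (z - 1) / (z ^ 2 - z + 1) := rfl
@[simp] lemma RD3_2121 (z : ℂ) : RD3 z (2,1) (2,1) = 0 := rfl
@[simp] lemma RD3_2122 (z : ℂ) : RD3 z (2,1) (2,2) = 0 := rfl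
@[simp] lemma RD3_2200 (z : ℂ) : RD3 z (2,2) (0,0) = 0 := rfl
@[simp] lemma RD3_2201 (z : ℂ) : RD3 z (2,2) (0,1) = 0 := rfl
@[simp] lemma RD3_2202 (z : ℂ) : RD3 z (2,2) (0,2) = 0 := rfl
@[simp] lemma RD3_2210 (z : ℂ) : RD3 z (2,2) (1,0) = 0 := rfl
@[simp] lemma RD3_2211 (z : ℂ) : RD3 z (2,2) (1,1) = 0 := rfl
@[simp] lemma RD3_2212 (z : ℂ) : RD3 z (2,2) (1,2) = 0 := rfl
@[simp] lemma RD3_2220 (z : ℂ) : RD3 z (2,2) (2,0) = 0 := rfl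
@[simp] lemma RD3_2221 (z : ℂ) : RD3 z (2,2) (2,1) = 0 := rfl
@[simp] lemma RD3_2222 (z : ℂ) : RD3 z (2,2) (2,2) = 1 := rfl

@[simp] lemma flipP_0000 : flipP (0,0) (0,0) = 1 := rfl
@[simp] lemma flipP_0001 : flipP (0,0) (0,1) = 0 := rfl
@[simp] lemma flipP_0002 : flipP (0,0) (0,2) = 0 := rfl
@[simp] lemma flipP_0010 : flipP (0,0) (1,0) = 0 := rfl
@[simp] lemma flipP_0011 : flipP (0,0) (1,1) = 0 := rfl
@[simp] lemma flipP_0012 : flipP (0,0) (1,2) = 0 := rfl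
@[simp] lemma flipP_0020 : flipP (0,0) (2,0) = 0 := rfl
@[simp] lemma flipP_0021 : flipP (0,0) (2,1) = 0 := rfl
@[simp] lemma flipP_0022 : flipP (0,0) (2,2) = 0 := rfl
@[simp] lemma flipP_0100 : flipP (0,1) (0,0) = 0 := rfl
@[simp] lemma flipP_0101 : flipP (0,1) (0,1) = 0 := rfl
@[simp] lemma flipP_0102 : flipP (0,1) (0,2) = 0 := rfl
@[simp] lemma flipP_0110 : flipP (0,1) (1,0) = 1 := rfl
@[simp] lemma flipP_0111 : flipP (0,1) (1,1) = 0 := rfl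
@[simp] lemma flipP_0112 : flipP (0,1) (1,2) = 0 := rfl
@[simp] lemma flipP_0120 : flipP (0,1) (2,0) = 0 := rfl
@[simp] lemma flipP_0121 : flipP (0,1) (2,1) = 0 := rfl
@[simp] lemma flipP_0122 : flipP (0,1) (2,2) = 0 := rfl
@[simp] lemma flipP_0200 : flipP (0,2) (0,0) = 0 := rfl
@[simp] lemma flipP_0201 : flipP (0,2) (0,1) = 0 := rfl
@[simp] lemma flipP_0202 : flipP (0,2) (0,2) = 0 := rfl
@[simp] lemma flipP_0210 : flipP (0,2) (1,0) = 0 := rfl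
@[simp] lemma flipP_0211 : flipP (0,2) (1,1) = 0 := rfl
@[simp] lemma flipP_0212 : flipP (0,2) (1,2) = 0 := rfl
@[simp] lemma flipP_0220 : flipP (0,2) (2,0) = 1 := rfl
@[simp] lemma flipP_0221 : flipP (0,2) (2,1) = 0 := rfl
@[simp] lemma flipP_0222 : flipP (0,2) (2,2) = 0 := rfl
@[simp] lemma flipP_1000 : flipP (1,0) (0,0) = 0 := rfl
@[simp] lemma flipP_1001 : flipP (1,0) (0,1) = 1 := rfl
@[simp] lemma flipP_1002 : flipP (1,0) (0,2) = 0 := rfl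
@[simp] lemma flipP_1010 : flipP (1,0) (1,0) = 0 := rfl
@[simp] lemma flipP_1011 : flipP (1,0) (1,1) = 0 := rfl
@[simp] lemma flipP_1012 : flipP (1,0) (1,2) = 0 := rfl
@[simp] lemma flipP_1020 : flipP (1,0) (2,0) = 0 := rfl
@[simp] lemma flipP_1021 : flipP (1,0) (2,1) = 0 := rfl
@[simp] lemma flipP_1022 : flipP (1,0) (2,2) = 0 := rfl
@[simp] lemma flipP_1100 : flipP (1,1) (0,0) = 0 := rfl
@[simp] lemma flipP_1101 : flipP (1,1) (0,1) = 0 := rfl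
@[simp] lemma flipP_1102 : flipP (1,1) (0,2) = 0 := rfl
@[simp] lemma flipP_1110 : flipP (1,1) (1,0) = 0 := rfl
@[simp] lemma flipP_1111 : flipP (1,1) (1,1) = 1 := rfl
@[simp] lemma flipP_1112 : flipP (1,1) (1,2) = 0 := rfl
@[simp] lemma flipP_1120 : flipP (1,1) (2,0) = 0 := rfl
@[simp] lemma flipP_1121 : flipP (1,1) (2,1) = 0 := rfl
@[simp] lemma flipP_1122 : flipP (1,1) (2,2) = 0 := rfl
@[simp] lemma flipP_1200 : flipP (1,2) (0,0) = 0 := rfl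
@[simp] lemma flipP_1201 : flipP (1,2) (0,1) = 0 := rfl
@[simp] lemma flipP_1202 : flipP (1,2) (0,2) = 0 := rfl
@[simp] lemma flipP_1210 : flipP (1,2) (1,0) = 0 := rfl
@[simp] lemma flipP_1211 : flipP (1,2) (1,1) = 0 := rfl
@[simp] lemma flipP_1212 : flipP (1,2) (1,2) = 0 := rfl
@[simp] lemma flipP_1220 : flipP (1,2) (2,0) = 0 := rfl
@[simp] lemma flipP_1221 : flipP (1,2) (2,1) = 1 := rfl
@[simp] lemma flipP_1222 : flipP (1,2) (2,2) = 0 := rfl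
@[simp] lemma flipP_2000 : flipP (2,0) (0,0) = 0 := rfl
@[simp] lemma flipP_2001 : flipP (2,0) (0,1) = 0 := rfl
@[simp] lemma flipP_2002 : flipP (2,0) (0,2) = 1 := rfl
@[simp] lemma flipP_2010 : flipP (2,0) (1,0) = 0 := rfl
@[simp] lemma flipP_2011 : flipP (2,0) (1,1) = 0 := rfl
@[simp] lemma flipP_2012 : flipP (2,0) (1,2) = 0 := rfl
@[simp] lemma flipP_2020 : flipP (2,0) (2,0) = 0 := rfl
@[simp] lemma flipP_2021 : flipP (2,0) (2,1) = 0 := rfl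
@[simp] lemma flipP_2022 : flipP (2,0) (2,2) = 0 := rfl
@[simp] lemma flipP_2100 : flipP (2,1) (0,0) = 0 := rfl
@[simp] lemma flipP_2101 : flipP (2,1) (0,1) = 0 := rfl
@[simp] lemma flipP_2102 : flipP (2,1) (0,2) = 0 := rfl
@[simp] lemma flipP_2110 : flipP (2,1) (1,0) = 0 := rfl
@[simp] lemma flipP_2111 : flipP (2,1) (1,1) = 0 := rfl
@[simp] lemma flipP_2112 : flipP (2,1) (1,2) = 1 := rfl
@[simp] lemma flipP_2120 : flipP (2,1) (2,0) = 0 := rfl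
@[simp] lemma flipP_2121 : flipP (2,1) (2,1) = 0 := rfl
@[simp] lemma flipP_2122 : flipP (2,1) (2,2) = 0 := rfl
@[simp] lemma flipP_2200 : flipP (2,2) (0,0) = 0 := rfl
@[simp] lemma flipP_2201 : flipP (2,2) (0,1) = 0 := rfl
@[simp] lemma flipP_2202 : flipP (2,2) (0,2) = 0 := rfl
@[simp] lemma flipP_2210 : flipP (2,2) (1,0) = 0 := rfl
@[simp] lemma flipP_2211 : flipP (2,2) (1,1) = 0 := rfl
@[simp] lemma flipP_2212 : flipP (2,2) (1,2) = 0 := rfl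
@[simp] lemma flipP_2220 : flipP (2,2) (2,0) = 0 := rfl
@[simp] lemma flipP_2221 : flipP (2,2) (2,1) = 0 := rfl
@[simp] lemma flipP_2222 : flipP (2,2) (2,2) = 1 := rfl
@[simp] lemma one3_00 : (1 : Matrix (Fin 3) (Fin 3) ℂ) 0 0 = 1 := rfl
@[simp] lemma one3_01 : (1 : Matrix (Fin 3) (Fin 3) ℂ) 0 1 = 0 := rfl
@[simp] lemma one3_02 : (1 : Matrix (Fin 3) (Fin 3) ℂ) 0 2 = 0 := rfl
@[simp] lemma one3_10 : (1 : Matrix (Fin 3) (Fin 3) ℂ) 1 0 = 0 := rfl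
@[simp] lemma one3_11 : (1 : Matrix (Fin 3) (Fin 3) ℂ) 1 1 = 1 := rfl
@[simp] lemma one3_12 : (1 : Matrix (Fin 3) (Fin 3) ℂ) 1 2 = 0 := rfl
@[simp] lemma one3_20 : (1 : Matrix (Fin 3) (Fin 3) ℂ) 2 0 = 0 := rfl
@[simp] lemma one3_21 : (1 : Matrix (Fin 3) (Fin 3) ℂ) 2 1 = 0 := rfl
@[simp] lemma one3_22 : (1 : Matrix (Fin 3) (Fin 3) ℂ) 2 2 = 1 := rfl
@[simp] lemma mat3_00 (a b c d e f g h i : ℂ) : !![a,b,c;d,e,f;g,h,i] 0 0 = a := rfl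
@[simp] lemma mat3_01 (a b c d e f g h i : ℂ) : !![a,b,c;d,e,f;g,h,i] 0 1 = b := rfl
@[simp] lemma mat3_02 (a b c d e f g h i : ℂ) : !![a,b,c;d,e,f;g,h,i] 0 2 = c := rfl
@[simp] lemma mat3_10 (a b c d e f g h i : ℂ) : !![a,b,c;d,e,f;g,h,i] 1 0 = d := rfl
@[simp] lemma mat3_11 (a b c d e f g h i : ℂ) : !![a,b,c;d,e,f;g,h,i] 1 1 = e := rfl
@[simp] lemma mat3_12 (a b c d e f g h i : ℂ) : !![a,b,c;d,e,f;g,h,i] 1 2 = f := rfl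
@[simp] lemma mat3_20 (a b c d e f g h i : ℂ) : !![a,b,c;d,e,f;g,h,i] 2 0 = g := rfl
@[simp] lemma mat3_21 (a b c d e f g h i : ℂ) : !![a,b,c;d,e,f;g,h,i] 2 1 = h := rfl
@[simp] lemma mat3_22 (a b c d e f g h i : ℂ) : !![a,b,c;d,e,f;g,h,i] 2 2 = i := rfl

@[simp] lemma kron1L (K : Matrix (Fin 3) (Fin 3) ℂ) (a b c d : Fin 3) :
    ((1 : Matrix (Fin 3) (Fin 3) ℂ) ⊗ₖ K) (a, b) (c, d) = (1 : Matrix (Fin 3) (Fin 3) ℂ) a c * K b d := rfl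
@[simp] lemma kron1R (K : Matrix (Fin 3) (Fin 3) ℂ) (a b c d : Fin 3) :
    (K ⊗ₖ (1 : Matrix (Fin 3) (Fin 3) ℂ)) (a, b) (c, d) = K a c * (1 : Matrix (Fin 3) (Fin 3) ℂ) b d := rfl

lemma cond_real (u : ℝ) : ((u:ℂ))^2 - (u:ℂ) + 1 ≠ 0 := by
  have h2 : ((u:ℂ))^2 - (u:ℂ) + 1 = ((u^2 - u + 1 : ℝ) : ℂ) := by push_cast; ring
  rw [h2]
  exact Complex.ofReal_ne_zero.2 (by nlinarith [sq_nonneg (2*u - 1)])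

lemma cond_norm {z : ℂ} (h : ‖z‖ ≠ 1) : z^2 - z + 1 ≠ 0 := by
  intro hc
  have h3 : z^3 = -1 := by linear_combination (z+1)*hc
  have h4 : ‖z‖^3 = 1 := by
    have := congrArg norm h3
    rwa [norm_pow, norm_neg, norm_one] at this
  have h5 : (‖z‖ - 1) * (‖z‖^2 + ‖z‖ + 1) = 0 := by linear_combination h4
  have h6 : ‖z‖^2 + ‖z‖ + 1 ≠ 0 := by nlinarith [norm_nonneg z]
  exact h (by have := (mul_eq_zero.1 h5).resolve_right h6; linarith [sub_eq_zero.1 this])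

set_option maxHeartbeats 2000000 in
set_option maxRecDepth 40000 in
lemma extract01 (α β γ Ax Bx Ay By x y : ℂ) (hy : y ≠ 0)
    (h1 : (x * y⁻¹) ^ 2 - x * y⁻¹ + 1 ≠ 0) (h2 : (x * y) ^ 2 - x * y + 1 ≠ 0)
    (h : RD3 (x * y⁻¹) * (!![Ax, α * Bx, α ^ 2 * Bx; β ^ 2 * Bx, Ax, β * Bx; γ * Bx, γ ^ 2 * Bx, Ax] ⊗ₖ (1 : Matrix (Fin 3) (Fin 3) ℂ)) *
        (flipP * RD3 (x * y) * flipP) * ((1 : Matrix (Fin 3) (Fin 3) ℂ) ⊗ₖ !![Ay, α * By, α ^ 2 * By; β ^ 2 * By, Ay, β * By; γ * By, γ ^ 2 * By, Ay])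
      = ((1 : Matrix (Fin 3) (Fin 3) ℂ) ⊗ₖ !![Ay, α * By, α ^ 2 * By; β ^ 2 * By, Ay, β * By; γ * By, γ ^ 2 * By, Ay]) * RD3 (x * y) *
          (!![Ax, α * Bx, α ^ 2 * Bx; β ^ 2 * Bx, Ax, β * Bx; γ * Bx, γ ^ 2 * Bx, Ax] ⊗ₖ (1 : Matrix (Fin 3) (Fin 3) ℂ)) * (flipP * RD3 (x * y⁻¹) * flipP)) :
    (α^2*γ^2*(x*y^3-2*x^2*y^2+x^3*y) + α^2*β^2*(-(y^2)+x*y+x*y^3-x^2*y^2)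
      + α^4*(-(x^2*y^2)+x^3*y+x^3*y^3-x^4*y^2))*(Bx*By)
      + α*(-(x*y)+x*y^3+x^3*y-x^3*y^3)*(Bx*Ay)
      + α*(y^2-2*x^2*y^2+x^4*y^2)*(Ax*By) = 0 := by
  have h01 := Matrix.ext_iff.2 h (0,0) (0,1)
  simp only [Matrix.mul_apply, Fintype.sum_prod_type, Fin.sum_univ_three,
    kron1L, kron1R, RD3_0000, RD3_0001, RD3_0002, RD3_0010, RD3_0011, RD3_0012, RD3_0020, RD3_0021, RD3_0022, RD3_0100, RD3_0101, RD3_0102, RD3_0110, RD3_0111, RD3_0112, RD3_0120, RD3_0121, RD3_0122, RD3_0200, RD3_0201, RD3_0202, RD3_0210, RD3_0211, RD3_0212, RD3_0220, RD3_0221, RD3_0222, RD3_1000, RD3_1001, RD3_1002, RD3_1010, RD3_1011, RD3_1012, RD3_1020, RD3_1021, RD3_1022, RD3_1100, RD3_1101, RD3_1102, RD3_1110, RD3_1111, RD3_1112, RD3_1120, RD3_1121, RD3_1122, RD3_1200, RD3_1201, RD3_1202, RD3_1210, RD3_1211, RD3_1212, RD3_1220, RD3_1221, RD3_1222, RD3_2000,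 RD3_2001, RD3_2002, RD3_2010, RD3_2011, RD3_2012, RD3_2020, RD3_2021, RD3_2022, RD3_2100, RD3_2101, RD3_2102, RD3_2110, RD3_2111, RD3_2112, RD3_2120, RD3_2121, RD3_2122, RD3_2200, RD3_2201, RD3_2202, RD3_2210, RD3_2211, RD3_2212, RD3_2220, RD3_2221, RD3_2222, flipP_0000, flipP_0001, flipP_0002, flipP_0010, flipP_0011, flipP_0012, flipP_0020, flipP_0021, flipP_0022, flipP_0100, flipP_0101, flipP_0102, flipP_0110, flipP_0111, flipP_0112, flipP_0120, flipP_0121, flipP_0122, flipP_0200, flipP_0201, flipP_0202, flipP_0210, flipP_0211, flipP_0212, flipP_0220, flipP_0221, flipP_0222, flipP_1000, flipP_1001, flipP_1002, flipP_1010, flipP_1011, flipP_1012, flipP_1020, flipP_1021, flipP_1022, flipP_1100, flipP_1101, flipP_1102, flipP_1110, flipP_1111, flipP_1112, flipP_1120, flipP_1121, flipP_1122, flipP_1200, flipP_1201, flipP_1202, flipP_1210, flipP_1211, flipP_1212, flipP_1220, flipP_1221, flipP_1222, flipP_2000, flipP_2001, flipP_2002, flipP_2010, flipP_2011, flipP_2012,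 flipP_2020, flipP_2021, flipP_2022, flipP_2100, flipP_2101, flipP_2102, flipP_2110, flipP_2111, flipP_2112, flipP_2120, flipP_2121, flipP_2122, flipP_2200, flipP_2201, flipP_2202, flipP_2210, flipP_2211, flipP_2212, flipP_2220, flipP_2221, flipP_2222, one3_00, one3_01, one3_02, one3_10, one3_11, one3_12, one3_20, one3_21, one3_22, mat3_00, mat3_01, mat3_02, mat3_10, mat3_11, mat3_12, mat3_20, mat3_21, mat3_22, mul_zero, zero_mul, one_mul, mul_one, add_zero, zero_add] at h01
  have e1 : (x * y⁻¹) ^ 2 - x * y⁻¹ + 1 = (x^2 - x*y + y^2)/y^2 := by field_simp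
  rw [e1] at h1
  have h1' : x^2 - x*y + y^2 ≠ 0 := by
    intro hc; exact h1 (by rw [hc]; simp)
  have h1'' : x^2*y - y^2*x + y^2*y ≠ 0 := by
    intro hc
    have h3 : y * (x^2 - x*y + y^2) = 0 := by linear_combination hc
    exact h1' ((mul_eq_zero.1 h3).resolve_left hy)
  have hd1 : x*y*(x*y-1)+1 ≠ 0 := by intro hc; exact h2 (by linear_combination hc)
  have hd2 : x*(x-y)+y^2 ≠ 0 := by intro hc; exact h1' (by linear_combination hc)
  field_simp [hy, h2, h1'', hd1, hd2] at h01
  have hM : (((x*y)^2 - x*y + 1)^2 * (y^5 * (x^2 - x*y + y^2))) ≠ 0 :=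
    mul_ne_zero (pow_ne_zero 2 h2) (mul_ne_zero (pow_ne_zero 5 hy) h1')
  have h0 : ((α^2*γ^2*(x*y^3-2*x^2*y^2+x^3*y) + α^2*β^2*(-(y^2)+x*y+x*y^3-x^2*y^2)
      + α^4*(-(x^2*y^2)+x^3*y+x^3*y^3-x^4*y^2))*(Bx*By)
      + α*(-(x*y)+x*y^3+x^3*y-x^3*y^3)*(Bx*Ay)
      + α*(y^2-2*x^2*y^2+x^4*y^2)*(Ax*By)) * (((x*y)^2 - x*y + 1)^2 * (y^5 * (x^2 - x*y + y^2))) = 0 := by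
    linear_combination (((x*y)^2 - x*y + 1)^2 * (y^5 * (x^2 - x*y + y^2))) * h01
  exact (mul_eq_zero.1 h0).resolve_right hM

set_option maxHeartbeats 2000000 in
set_option maxRecDepth 40000 in
lemma extract10 (α β γ Ax Bx Ay By x y : ℂ) (hy : y ≠ 0)
    (h1 : (x * y⁻¹) ^ 2 - x * y⁻¹ + 1 ≠ 0) (h2 : (x * y) ^ 2 - x * y + 1 ≠ 0)
    (h : RD3 (x * y⁻¹) * (!![Ax, α * Bx, α ^ 2 * Bx; β ^ 2 * Bx, Ax, β * Bx; γ * Bx, γ ^ 2 * Bx, Ax] ⊗ₖ (1 : Matrix (Fin 3) (Fin 3) ℂ)) *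
        (flipP * RD3 (x * y) * flipP) * ((1 : Matrix (Fin 3) (Fin 3) ℂ) ⊗ₖ !![Ay, α * By, α ^ 2 * By; β ^ 2 * By, Ay, β * By; γ * By, γ ^ 2 * By, Ay])
      = ((1 : Matrix (Fin 3) (Fin 3) ℂ) ⊗ₖ !![Ay, α * By, α ^ 2 * By; β ^ 2 * By, Ay, β * By; γ * By, γ ^ 2 * By, Ay]) * RD3 (x * y) *
          (!![Ax, α * Bx, α ^ 2 * Bx; β ^ 2 * Bx, Ax, β * Bx; γ * Bx, γ ^ 2 * Bx, Ax] ⊗ₖ (1 : Matrix (Fin 3) (Fin 3) ℂ)) * (flipP * RD3 (x * y⁻¹) * flipP)) :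
    (α*γ*(y^2-2*x*y-x*y^3+x^2+2*x^2*y^2-x^3*y) + α*β*(x^2*y^2-x^3*y)
      + α^2*(x*y^3-x^2*y^2-x^2*y^4+x^3*y^3))*(Bx*By)
      + α^2*(x*y-x*y^3-x^2+x^2*y^4)*(Bx*Ay)
      + α^2*(-(y^2)+x*y+x*y^3+x^2*y^2-x^3*y-x^3*y^3)*(Ax*By) = 0 := by
  have h01 := Matrix.ext_iff.2 h (0,0) (1,0)
  simp only [Matrix.mul_apply, Fintype.sum_prod_type, Fin.sum_univ_three,
    kron1L, kron1R, RD3_0000, RD3_0001, RD3_0002, RD3_0010, RD3_0011, RD3_0012, RD3_0020, RD3_0021, RD3_0022, RD3_0100, RD3_0101, RD3_0102, RD3_0110, RD3_0111, RD3_0112, RD3_0120, RD3_0121, RD3_0122, RD3_0200, RD3_0201, RD3_0202, RD3_0210, RD3_0211, RD3_0212, RD3_0220, RD3_0221, RD3_0222, RD3_1000, RD3_1001, RD3_1002, RD3_1010, RD3_1011, RD3_1012, RD3_1020, RD3_1021, RD3_1022, RD3_1100, RD3_1101, RD3_1102, RD3_1110, RD3_1111, RD3_1112, RD3_1120, RD3_1121,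 RD3_1122, RD3_1200, RD3_1201, RD3_1202, RD3_1210, RD3_1211, RD3_1212, RD3_1220, RD3_1221, RD3_1222, RD3_2000, RD3_2001, RD3_2002, RD3_2010, RD3_2011, RD3_2012, RD3_2020, RD3_2021, RD3_2022, RD3_2100, RD3_2101, RD3_2102, RD3_2110, RD3_2111, RD3_2112, RD3_2120, RD3_2121, RD3_2122, RD3_2200, RD3_2201, RD3_2202, RD3_2210, RD3_2211, RD3_2212, RD3_2220, RD3_2221, RD3_2222, flipP_0000, flipP_0001, flipP_0002, flipP_0010, flipP_0011, flipP_0012, flipP_0020, flipP_0021, flipP_0022, flipP_0100, flipP_0101, flipP_0102, flipP_0110, flipP_0111, flipP_0112, flipP_0120, flipP_0121, flipP_0122, flipP_0200, flipP_0201, flipP_0202, flipP_0210, flipP_0211, flipP_0212, flipP_0220, flipP_0221, flipP_0222, flipP_1000, flipP_1001, flipP_1002, flipP_1010, flipP_1011, flipP_1012, flipP_1020, flipP_1021, flipP_1022, flipP_1100, flipP_1101, flipP_1102, flipP_1110, flipP_1111, flipP_1112, flipP_1120, flipP_1121, flipP_1122, flipP_1200, flipP_1201, flipP_1202, flipP_1210,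 flipP_1211, flipP_1212, flipP_1220, flipP_1221, flipP_1222, flipP_2000, flipP_2001, flipP_2002, flipP_2010, flipP_2011, flipP_2012, flipP_2020, flipP_2021, flipP_2022, flipP_2100, flipP_2101, flipP_2102, flipP_2110, flipP_2111, flipP_2112, flipP_2120, flipP_2121, flipP_2122, flipP_2200, flipP_2201, flipP_2202, flipP_2210, flipP_2211, flipP_2212, flipP_2220, flipP_2221, flipP_2222, one3_00, one3_01, one3_02, one3_10, one3_11, one3_12, one3_20, one3_21, one3_22, mat3_00, mat3_01, mat3_02, mat3_10, mat3_11, mat3_12, mat3_20, mat3_21, mat3_22, mul_zero, zero_mul, one_mul, mul_one, add_zero, zero_add] at h01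
  have e1 : (x * y⁻¹) ^ 2 - x * y⁻¹ + 1 = (x^2 - x*y + y^2)/y^2 := by field_simp
  rw [e1] at h1
  have h1' : x^2 - x*y + y^2 ≠ 0 := by
    intro hc; exact h1 (by rw [hc]; simp)
  have h1'' : x^2*y - y^2*x + y^2*y ≠ 0 := by
    intro hc
    have h3 : y * (x^2 - x*y + y^2) = 0 := by linear_combination hc
    exact h1' ((mul_eq_zero.1 h3).resolve_left hy)
  have hd1 : x*y*(x*y-1)+1 ≠ 0 := by intro hc; exact h2 (by linear_combination hc)
  have hd2 : x*(x-y)+y^2 ≠ 0 := by intro hc; exact h1' (by linear_combination hc)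
  field_simp [hy, h2, h1'', hd1, hd2] at h01
  have hM : (((x*y)^2 - x*y + 1)^2 * (y^5 * (x^2 - x*y + y^2))) ≠ 0 :=
    mul_ne_zero (pow_ne_zero 2 h2) (mul_ne_zero (pow_ne_zero 5 hy) h1')
  have h0 : ((α*γ*(y^2-2*x*y-x*y^3+x^2+2*x^2*y^2-x^3*y) + α*β*(x^2*y^2-x^3*y)
      + α^2*(x*y^3-x^2*y^2-x^2*y^4+x^3*y^3))*(Bx*By)
      + α^2*(x*y-x*y^3-x^2+x^2*y^4)*(Bx*Ay)
      + α^2*(-(y^2)+x*y+x*y^3+x^2*y^2-x^3*y-x^3*y^3)*(Ax*By)) * (((x*y)^2 - x*y + 1)^2 * (y^5 * (x^2 - x*y + y^2))) = 0 := by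
    linear_combination (((x*y)^2 - x*y + 1)^2 * (y^5 * (x^2 - x*y + y^2))) * h01
  exact (mul_eq_zero.1 h0).resolve_right hM


theorem statement_11 (α β γ : ℂ)
    (hα : α ^ 3 = 1) (hβ : β ^ 3 = 1) (hγ : γ ^ 3 = 1) (hαβγ : α * β * γ = 1)
    (A B : ℂ → ℂ)
    (hA : Filter.Tendsto A (Bornology.cobounded ℂ) (nhds 1))
    (hB : Filter.Tendsto B (Bornology.cobounded ℂ) (nhds 1))
    (hre : REminus (fun z => !![A z, α * B z, α ^ 2 * B z;
                                β ^ 2 * B z, A z, β * B z;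
                                γ * B z, γ ^ 2 * B z, A z])) :
    ∃ w b : ℂ, w ^ 3 = 1 ∧ w ≠ 1 ∧ β = w * α ∧ γ = w ^ 2 * α ∧
      ∀ z : ℂ, z ≠ 0 → (1 - z ^ 2) * A z = (w ^ 2 + b * z - z ^ 2) * B z := by
  have hα0 : α ≠ 0 := by intro h; rw [h] at hα; norm_num at hα
  have hβ0 : β ≠ 0 := by intro h; rw [h] at hβ; norm_num at hβ
  set w : ℂ := β * α ^ 2 with hw_def
  have hw3 : w ^ 3 = 1 := by
    have h1 : w ^ 3 = β ^ 3 * (α ^ 3) ^ 2 := by rw [hw_def]; ring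
    rw [h1, hα, hβ]; norm_num
  have hβw : β = w * α := by
    have h1 : w * α = β * α ^ 3 := by rw [hw_def]; ring
    rw [hα] at h1; rw [h1]; ring
  have hγw : γ = w ^ 2 * α := by
    have hαβ : α * β ≠ 0 := mul_ne_zero hα0 hβ0
    have h1 : α * β * γ = α * β * (w ^ 2 * α) := by
      rw [hαβγ]
      have h2 : α * β * (w ^ 2 * α) = β ^ 3 * (α ^ 3) ^ 2 := by rw [hw_def]; ring
      rw [h2, hα, hβ]; norm_num
    exact mul_left_cancel₀ hαβ h1
  -- B is eventually nonzero
  have hBne : ∀ᶠ z in Bornology.cobounded ℂ, B z ≠ 0 := hB.eventually_ne one_ne_zero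
  obtain ⟨R, -, hR⟩ := (Filter.hasBasis_cobounded_norm.eventually_iff).1 hBne
  set r : ℝ := max R 2 with hr_def
  have hr2 : (2:ℝ) ≤ r := le_max_right _ _
  have hrB : ∀ s : ℝ, r ≤ s → B ((s:ℝ):ℂ) ≠ 0 := by
    intro s hs
    apply hR
    have h1 : ‖((s:ℝ):ℂ)‖ = |s| := Complex.norm_real s
    have h2 : |s| = s := abs_of_nonneg (by linarith)
    simp only [Set.mem_setOf_eq, h1, h2]
    exact le_trans (le_max_left _ _) hs
  have hr0 : ((r:ℝ):ℂ) ≠ 0 := Complex.ofReal_ne_zero.2 (by linarith)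
  -- clean form of entry ((0,0),(0,1)) of the reflection equation
  have hclean : ∀ x y : ℂ, x ≠ 0 → y ≠ 0 →
      (x * y⁻¹) ^ 2 - x * y⁻¹ + 1 ≠ 0 → (x * y) ^ 2 - x * y + 1 ≠ 0 →
      (w*(x*y^3-2*x^2*y^2+x^3*y) + w^2*(-(y^2)+x*y+x*y^3-x^2*y^2)
        + (-(x^2*y^2)+x^3*y+x^3*y^3-x^4*y^2))*(B x*B y)
        + (-(x*y)+x*y^3+x^3*y-x^3*y^3)*(B x*A y)
        + (y^2-2*x^2*y^2+x^4*y^2)*(A x*B y) = 0 := by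
    intro x y hx hy h1 h2
    have hE := extract01 α β γ (A x) (B x) (A y) (B y) x y hy h1 h2 (hre x y hx hy h1 h2)
    rw [hβw, hγw] at hE
    linear_combination (α^2) * hE
      - (((w*(x*y^3-2*x^2*y^2+x^3*y) + w^2*(-(y^2)+x*y+x*y^3-x^2*y^2)
          + (-(x^2*y^2)+x^3*y+x^3*y^3-x^4*y^2))*(1+α^3))*(B x*B y)
        + (-(x*y)+x*y^3+x^3*y-x^3*y^3)*(B x*A y)
        + (y^2-2*x^2*y^2+x^4*y^2)*(A x*B y))*hα
      - (w*α^6*(x*y^3-2*x^2*y^2+x^3*y)*(B x*B y))*hw3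
  -- Step A : 1 + w + w² = 0
  have hw1 : 1 + w + w ^ 2 = 0 := by
    set X : ℂ := ((2*r:ℝ):ℂ) with hX
    set Y : ℂ := ((r:ℝ):ℂ) with hY
    have hX0 : X ≠ 0 := Complex.ofReal_ne_zero.2 (by linarith)
    have hY0 : Y ≠ 0 := hr0
    have c1 : (X * Y⁻¹) ^ 2 - X * Y⁻¹ + 1 ≠ 0 := by
      have h1 : X * Y⁻¹ = (((2*r)/r : ℝ):ℂ) := by rw [hX, hY]; push_cast; ring
      rw [h1]; exact cond_real _
    have c2 : (X * Y) ^ 2 - X * Y + 1 ≠ 0 := by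
      have h1 : X * Y = (((2*r)*r : ℝ):ℂ) := by rw [hX, hY]; push_cast; ring
      rw [h1]; exact cond_real _
    have c1' : (Y * X⁻¹) ^ 2 - Y * X⁻¹ + 1 ≠ 0 := by
      have h1 : Y * X⁻¹ = ((r/(2*r) : ℝ):ℂ) := by rw [hX, hY]; push_cast; ring
      rw [h1]; exact cond_real _
    have c2' : (Y * X) ^ 2 - Y * X + 1 ≠ 0 := by
      have h1 : Y * X = ((r*(2*r) : ℝ):ℂ) := by rw [hX, hY]; push_cast; ring
      rw [h1]; exact cond_real _
    have hc1 := hclean X Y hX0 hY0 c1 c2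
    have hc2 := hclean Y X hY0 hX0 c1' c2'
    have hcomb : (1 + w + w ^ 2) *
        (X*Y^2*(1-X^2)*(X-Y)*(X^2-Y^2)*(1-X*Y)*(B X*B Y)) = 0 := by
      linear_combination (-(X*(Y*(X^2-1)*(1-Y^2))))*hc1 + (Y*(Y*(1-X^2)^2))*hc2
    have hne : (X*Y^2*(1-X^2)*(X-Y)*(X^2-Y^2)*(1-X*Y)*(B X*B Y)) ≠ 0 := by
      have e1 : (1:ℂ) - X^2 = ((1 - (2*r)^2 : ℝ):ℂ) := by rw [hX]; push_cast; ring
      have e2 : X - Y = ((2*r - r : ℝ):ℂ) := by rw [hX, hY]; push_cast; ring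
      have e3 : X^2 - Y^2 = (((2*r)^2 - r^2 : ℝ):ℂ) := by rw [hX, hY]; push_cast; ring
      have e4 : (1:ℂ) - X*Y = ((1 - (2*r)*r : ℝ):ℂ) := by rw [hX, hY]; push_cast; ring
      refine mul_ne_zero (mul_ne_zero (mul_ne_zero (mul_ne_zero (mul_ne_zero
        (mul_ne_zero hX0 (pow_ne_zero 2 hY0)) ?_) ?_) ?_) ?_)
        (mul_ne_zero ?_ ?_)
      · rw [e1]; exact Complex.ofReal_ne_zero.2 (by nlinarith)
      · rw [e2]; exact Complex.ofReal_ne_zero.2 (by nlinarith)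
      · rw [e3]; exact Complex.ofReal_ne_zero.2 (by nlinarith)
      · rw [e4]; exact Complex.ofReal_ne_zero.2 (by nlinarith)
      · exact hrB (2*r) (by linarith)
      · exact hrB r le_rfl
    exact (mul_eq_zero.1 hcomb).resolve_right hne
  have hwne1 : w ≠ 1 := by
    intro h; rw [h] at hw1; norm_num at hw1
  -- separated key relation
  have hkey : ∀ x y : ℂ, x ≠ 0 → y ≠ 0 →
      (x * y⁻¹) ^ 2 - x * y⁻¹ + 1 ≠ 0 → (x * y) ^ 2 - x * y + 1 ≠ 0 →
      y*(1-x^2)*((1-x^2)*(A x)*(y*(B y))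
        - ((w^2-x^2)*(y*(B y)) + x*((y^2-w^2)*(B y) - (y^2-1)*(A y)))*(B x)) = 0 := by
    intro x y hx hy h1 h2
    have hc := hclean x y hx hy h1 h2
    linear_combination hc - ((x*y^3-2*x^2*y^2+x^3*y)*(B x*B y))*hw1
  -- the key relation with divisions removed, for real x
  have hkeyR : ∀ s u : ℝ, r ≤ u → 2 ≤ s → s ≠ 0 →
      (1-((s:ℝ):ℂ)^2)*(A s)*(((u:ℝ):ℂ)*(B u))
        = ((w^2-((s:ℝ):ℂ)^2)*(((u:ℝ):ℂ)*(B u))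
            + ((s:ℝ):ℂ)*((((u:ℝ):ℂ)^2-w^2)*(B u) - (((u:ℝ):ℂ)^2-1)*(A u))) * (B s) := by
    intro s u hu hs2 hs0
    have hu0 : ((u:ℝ):ℂ) ≠ 0 := Complex.ofReal_ne_zero.2 (by linarith)
    have hs0' : ((s:ℝ):ℂ) ≠ 0 := Complex.ofReal_ne_zero.2 hs0
    have c1 : (((s:ℝ):ℂ) * ((u:ℝ):ℂ)⁻¹) ^ 2 - ((s:ℝ):ℂ) * ((u:ℝ):ℂ)⁻¹ + 1 ≠ 0 := by
      have h1 : ((s:ℝ):ℂ) * ((u:ℝ):ℂ)⁻¹ = ((s/u : ℝ):ℂ) := by push_cast; ring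
      rw [h1]; exact cond_real _
    have c2 : (((s:ℝ):ℂ) * ((u:ℝ):ℂ)) ^ 2 - ((s:ℝ):ℂ) * ((u:ℝ):ℂ) + 1 ≠ 0 := by
      have h1 : ((s:ℝ):ℂ) * ((u:ℝ):ℂ) = ((s*u : ℝ):ℂ) := by push_cast; ring
      rw [h1]; exact cond_real _
    have hk := hkey ((s:ℝ):ℂ) ((u:ℝ):ℂ) hs0' hu0 c1 c2
    have hx2 : (1:ℂ) - ((s:ℝ):ℂ)^2 ≠ 0 := by
      have e1 : (1:ℂ) - ((s:ℝ):ℂ)^2 = ((1 - s^2 : ℝ):ℂ) := by push_cast; ring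
      rw [e1]; exact Complex.ofReal_ne_zero.2 (by nlinarith)
    have h3 := (mul_eq_zero.1 hk).resolve_left (mul_ne_zero hu0 hx2)
    linear_combination h3
  -- definition of b
  set b : ℂ := ((((r:ℝ):ℂ)^2-w^2)*(B r) - (((r:ℝ):ℂ)^2-1)*(A r)) / (((r:ℝ):ℂ)*(B r)) with hb_def
  have hrBne : ((r:ℝ):ℂ)*(B r) ≠ 0 := mul_ne_zero hr0 (hrB r le_rfl)
  -- b is well defined : for every u ≥ r the same ratio comes out
  have hbW : ∀ u : ℝ, r ≤ u →
      ((((u:ℝ):ℂ)^2-w^2)*(B u) - (((u:ℝ):ℂ)^2-1)*(A u)) = b * (((u:ℝ):ℂ)*(B u)) := by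
    intro u hu
    set sx : ℝ := u + r with hsx
    have hsx2 : (2:ℝ) ≤ sx := by rw [hsx]; linarith
    have hsx0 : sx ≠ 0 := by linarith
    have h1 := hkeyR sx u hu hsx2 hsx0
    have h2 := hkeyR sx r le_rfl hsx2 hsx0
    have hBsx : B ((sx:ℝ):ℂ) ≠ 0 := hrB sx (by rw [hsx]; linarith)
    have hsx0' : ((sx:ℝ):ℂ) ≠ 0 := Complex.ofReal_ne_zero.2 hsx0
    have h3 : ((sx:ℝ):ℂ) * (B ((sx:ℝ):ℂ)) *
        (((((u:ℝ):ℂ)^2-w^2)*(B u) - (((u:ℝ):ℂ)^2-1)*(A u)) * (((r:ℝ):ℂ)*(B r))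
          - ((((r:ℝ):ℂ)^2-w^2)*(B r) - (((r:ℝ):ℂ)^2-1)*(A r)) * (((u:ℝ):ℂ)*(B u))) = 0 := by
      linear_combination (((u:ℝ):ℂ)*(B u)) * h2 - (((r:ℝ):ℂ)*(B r)) * h1
    have h4 := (mul_eq_zero.1 h3).resolve_left (mul_ne_zero hsx0' hBsx)
    rw [hb_def]
    rw [div_mul_eq_mul_div, eq_div_iff hrBne]
    linear_combination h4
  -- main relation for z ∉ {0,1,-1}
  have hmain : ∀ z : ℂ, z ≠ 0 → z ≠ 1 → z ≠ -1 →
      (1 - z ^ 2) * A z = (w ^ 2 + b * z - z ^ 2) * B z := by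
    intro z hz hz1 hzm
    have hz' : 0 < ‖z‖ := norm_pos_iff.2 hz
    set u : ℝ := max r (max (‖z‖+1) (1/‖z‖+1)) with hu_def
    have hur : r ≤ u := le_max_left _ _
    have hu2 : (2:ℝ) ≤ u := le_trans hr2 hur
    have huz : ‖z‖ + 1 ≤ u := le_trans (le_max_left _ _) (le_max_right _ _)
    have huz' : 1/‖z‖ + 1 ≤ u := le_trans (le_max_right _ _) (le_max_right _ _)
    have hu0 : ((u:ℝ):ℂ) ≠ 0 := Complex.ofReal_ne_zero.2 (by linarith)
    have hu0' : (0:ℝ) < u := by linarith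
    have c1 : (z * ((u:ℝ):ℂ)⁻¹) ^ 2 - z * ((u:ℝ):ℂ)⁻¹ + 1 ≠ 0 := by
      apply cond_norm
      have e1 : ‖z * ((u:ℝ):ℂ)⁻¹‖ = ‖z‖ / u := by
        rw [norm_mul, norm_inv, Complex.norm_real, Real.norm_eq_abs, abs_of_nonneg (le_of_lt hu0')]
        ring
      rw [e1]
      have : ‖z‖ / u < 1 := (div_lt_one hu0').2 (by linarith)
      linarith
    have c2 : (z * ((u:ℝ):ℂ)) ^ 2 - z * ((u:ℝ):ℂ) + 1 ≠ 0 := by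
      apply cond_norm
      have e1 : ‖z * ((u:ℝ):ℂ)‖ = ‖z‖ * u := by
        rw [norm_mul, Complex.norm_real, Real.norm_eq_abs, abs_of_nonneg (le_of_lt hu0')]
      rw [e1]
      have h5 : 1/‖z‖ < u := by linarith
      have h6 : 1 < ‖z‖ * u := by
        rw [div_lt_iff₀ hz'] at h5
        nlinarith
      linarith
    have hk := hkey z ((u:ℝ):ℂ) hz hu0 c1 c2
    have hz2 : (1:ℂ) - z^2 ≠ 0 := by
      intro hc
      have h5 : (z - 1) * (z + 1) = 0 := by linear_combination -hc
      rcases mul_eq_zero.1 h5 with h6 | h6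
      · exact hz1 (by linear_combination h6)
      · exact hzm (by linear_combination h6)
    have h3 := (mul_eq_zero.1 hk).resolve_left (mul_ne_zero hu0 hz2)
    have h4 := hbW u hur
    have hBu : B ((u:ℝ):ℂ) ≠ 0 := hrB u hur
    have h5 : (((u:ℝ):ℂ) * (B ((u:ℝ):ℂ))) *
        ((1 - z ^ 2) * A z - (w ^ 2 + b * z - z ^ 2) * B z) = 0 := by
      linear_combination h3 + z * (B z) * h4
    have h6 := (mul_eq_zero.1 h5).resolve_left (mul_ne_zero hu0 hBu)
    linear_combination h6
  -- clean form of entry ((0,0),(1,0))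
  have hclean2 : ∀ x y : ℂ, x ≠ 0 → y ≠ 0 →
      (x * y⁻¹) ^ 2 - x * y⁻¹ + 1 ≠ 0 → (x * y) ^ 2 - x * y + 1 ≠ 0 →
      (w^2*(y^2-2*x*y-x*y^3+x^2+2*x^2*y^2-x^3*y) + w*(x^2*y^2-x^3*y)
        + (x*y^3-x^2*y^2-x^2*y^4+x^3*y^3))*(B x*B y)
        + (x*y-x*y^3-x^2+x^2*y^4)*(B x*A y)
        + (-(y^2)+x*y+x*y^3+x^2*y^2-x^3*y-x^3*y^3)*(A x*B y) = 0 := by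
    intro x y hx hy h1 h2
    have hE := extract10 α β γ (A x) (B x) (A y) (B y) x y hy h1 h2 (hre x y hx hy h1 h2)
    rw [hβw, hγw] at hE
    linear_combination α * hE
      - ((w^2*(y^2-2*x*y-x*y^3+x^2+2*x^2*y^2-x^3*y) + w*(x^2*y^2-x^3*y)
          + (x*y^3-x^2*y^2-x^2*y^4+x^3*y^3))*(B x*B y)
        + (x*y-x*y^3-x^2+x^2*y^4)*(B x*A y)
        + (-(y^2)+x*y+x*y^3+x^2*y^2-x^3*y-x^3*y^3)*(A x*B y))*hα
  -- relation at the base point r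
  have hrel : (1 - ((r:ℝ):ℂ) ^ 2) * A r = (w ^ 2 + b * ((r:ℝ):ℂ) - ((r:ℝ):ℂ) ^ 2) * B r := by
    apply hmain
    · exact hr0
    · intro h
      have := Complex.ofReal_injective (by rw [h]; norm_num : ((r:ℝ):ℂ) = ((1:ℝ):ℂ))
      linarith
    · intro h
      have := Complex.ofReal_injective (by rw [h]; norm_num : ((r:ℝ):ℂ) = ((-1:ℝ):ℂ))
      linarith
  have hyprod : ((r:ℝ):ℂ)*(((r:ℝ):ℂ)^2-((r:ℝ):ℂ)+1) ≠ 0 := by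
    have e1 : ((r:ℝ):ℂ)*(((r:ℝ):ℂ)^2-((r:ℝ):ℂ)+1) = ((r*(r^2-r+1) : ℝ):ℂ) := by
      push_cast; ring
    rw [e1]; exact Complex.ofReal_ne_zero.2 (by nlinarith)
  have hyprod' : ((r:ℝ):ℂ)*(((r:ℝ):ℂ)^2+((r:ℝ):ℂ)+1) ≠ 0 := by
    have e1 : ((r:ℝ):ℂ)*(((r:ℝ):ℂ)^2+((r:ℝ):ℂ)+1) = ((r*(r^2+r+1) : ℝ):ℂ) := by
      push_cast; ring
    rw [e1]; exact Complex.ofReal_ne_zero.2 (by nlinarith)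
  refine ⟨w, b, hw3, hwne1, hβw, hγw, ?_⟩
  intro z hz
  by_cases hz1 : z = 1
  · subst hz1
    have hlhs : (1 - (1:ℂ)^2) = 0 := by norm_num
    rw [hlhs, zero_mul]
    by_cases hB1 : B 1 = 0
    · rw [hB1, mul_zero]
    · -- b = 1 - w²
      have c1 : ((1:ℂ) * ((r:ℝ):ℂ)⁻¹) ^ 2 - (1:ℂ) * ((r:ℝ):ℂ)⁻¹ + 1 ≠ 0 := by
        have h1 : (1:ℂ) * ((r:ℝ):ℂ)⁻¹ = ((1/r : ℝ):ℂ) := by push_cast; ring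
        rw [h1]; exact cond_real _
      have c2 : ((1:ℂ) * ((r:ℝ):ℂ)) ^ 2 - (1:ℂ) * ((r:ℝ):ℂ) + 1 ≠ 0 := by
        have h1 : (1:ℂ) * ((r:ℝ):ℂ) = ((r : ℝ):ℂ) := by push_cast; ring
        rw [h1]; exact cond_real _
      have hc2 := hclean2 1 ((r:ℝ):ℂ) one_ne_zero hr0 c1 c2
      have h5 : (1 - b - w^2) * (((r:ℝ):ℂ)*(((r:ℝ):ℂ)^2-((r:ℝ):ℂ)+1)) * (B 1 * B r) = 0 := by
        linear_combination hc2 - (((r:ℝ):ℂ)-1-((r:ℝ):ℂ)^2)*(B 1)*hrel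
          - (((r:ℝ):ℂ)^2-((r:ℝ):ℂ))*(B 1*B r)*hw1
      have h6 := (mul_eq_zero.1 h5).resolve_right (mul_ne_zero hB1 (hrB r le_rfl))
      have h7 := (mul_eq_zero.1 h6).resolve_right hyprod
      linear_combination (B 1) * h7
  · by_cases hzm : z = -1
    · subst hzm
      have hlhs : (1 - (-1:ℂ)^2) = 0 := by norm_num
      rw [hlhs, zero_mul]
      by_cases hB1 : B (-1) = 0
      · rw [hB1, mul_zero]
      · have c1 : ((-1:ℂ) * ((r:ℝ):ℂ)⁻¹) ^ 2 - (-1:ℂ) * ((r:ℝ):ℂ)⁻¹ + 1 ≠ 0 := by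
          have h1 : (-1:ℂ) * ((r:ℝ):ℂ)⁻¹ = ((-(1/r) : ℝ):ℂ) := by push_cast; ring
          rw [h1]; exact cond_real _
        have c2 : ((-1:ℂ) * ((r:ℝ):ℂ)) ^ 2 - (-1:ℂ) * ((r:ℝ):ℂ) + 1 ≠ 0 := by
          have h1 : (-1:ℂ) * ((r:ℝ):ℂ) = ((-r : ℝ):ℂ) := by push_cast; ring
          rw [h1]; exact cond_real _
        have hc2 := hclean2 (-1) ((r:ℝ):ℂ) (by norm_num) hr0 c1 c2
        have h5 : (b + 1 - w^2) * (((r:ℝ):ℂ)*(((r:ℝ):ℂ)^2+((r:ℝ):ℂ)+1)) * (B (-1) * B r) = 0 := by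
          linear_combination (-1)*hc2 + (-(((r:ℝ):ℂ)^2+((r:ℝ):ℂ)+1))*(B (-1))*hrel
            + (((r:ℝ):ℂ)+((r:ℝ):ℂ)^2)*(B (-1)*B r)*hw1
        have h6 := (mul_eq_zero.1 h5).resolve_right (mul_ne_zero hB1 (hrB r le_rfl))
        have h7 := (mul_eq_zero.1 h6).resolve_right hyprod'
        linear_combination (B (-1)) * h7
    · exact hmain z hz hz1 hzm
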